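/- For a triangle ABC all of whose interior angles are less than 120 degrees, the minimizer of x ↦ ‖x - A‖ + ‖x - B‖ + ‖x - C‖ is the unique interior point (the Fermat–Torricelli point) from which each pair of the three vertices subtends an angle of exactly 120 degrees. -/

import Mathlib

open Real EuclideanGeometry
open scoped RealInnerProductSpace

variable {V : Type*} [NormedAddCommGroup V] [InnerProductSpace ℝ V]

lemma FT_upper (x d : V) (hx : x ≠ 0) (hd : ‖d‖ ≤ ‖x‖) :
    ‖x + d‖ ≤ ‖x‖ + ⟪d, x⟫/‖x‖ + ‖d‖^2/(2*‖x‖) := by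
  have ha : (0:ℝ) < ‖x‖ := norm_pos_iff.mpr hx
  have h1 : ‖x + d‖^2 = ‖x‖^2 + 2 * ⟪x, d⟫ + ‖d‖^2 := norm_add_sq_real x d
  have h2 : ⟪d, x⟫ = ⟪x, d⟫ := real_inner_comm x d
  have h3 : -(‖d‖ * ‖x‖) ≤ ⟪d, x⟫ := by
    have := abs_real_inner_le_norm d x
    have := abs_le.mp this
    linarith [this.1]
  have hdiv : -‖d‖ ≤ ⟪d, x⟫/‖x‖ := by
    rw [le_div_iff₀ ha]; nlinarith
  have hq : 0 ≤ ‖d‖^2/(2*‖x‖) := by positivity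
  have hb : 0 ≤ ‖x‖ + ⟪d, x⟫/‖x‖ + ‖d‖^2/(2*‖x‖) := by nlinarith
  have key : ‖x + d‖^2 ≤ (‖x‖ + ⟪d, x⟫/‖x‖ + ‖d‖^2/(2*‖x‖))^2 := by
    have e1 : ⟪d, x⟫/‖x‖ * ‖x‖ = ⟪d, x⟫ := div_mul_cancel₀ _ (ne_of_gt ha)
    have e2 : ‖d‖^2/(2*‖x‖) * (2*‖x‖) = ‖d‖^2 := div_mul_cancel₀ _ (by positivity)
    nlinarith [sq_nonneg (⟪d,x⟫/‖x‖ + ‖d‖^2/(2*‖x‖))]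
  nlinarith [norm_nonneg (x + d)]

/-- At a vertex with angle < 2π/3, the distance-sum is not minimal. -/
lemma FT_vertex_not_min (P Q R : V) (hQ : Q ≠ P) (hR : R ≠ P) (h : ∠ Q P R < 2*π/3) :
    ∃ x : V, ‖x - P‖ + ‖x - Q‖ + ‖x - R‖ < ‖P - Q‖ + ‖P - R‖ := by
  have hq : (0:ℝ) < ‖Q - P‖ := by rw [norm_pos_iff]; exact sub_ne_zero.mpr hQ
  have hr : (0:ℝ) < ‖R - P‖ := by rw [norm_pos_iff]; exact sub_ne_zero.mpr hR
  obtain ⟨v, hv_def⟩ : ∃ v : V, v = ‖Q - P‖⁻¹ • (Q - P) := ⟨_, rfl⟩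
  obtain ⟨w, hw_def⟩ : ∃ w : V, w = ‖R - P‖⁻¹ • (R - P) := ⟨_, rfl⟩
  have hv1 : ‖v‖ = 1 := by rw [hv_def, norm_smul, norm_inv, norm_norm, inv_mul_cancel₀ hq.ne']
  have hw1 : ‖w‖ = 1 := by rw [hw_def, norm_smul, norm_inv, norm_norm, inv_mul_cancel₀ hr.ne']
  have hQP : Q - P = ‖Q - P‖ • v := by rw [hv_def, smul_inv_smul₀ hq.ne']
  have hRP : R - P = ‖R - P‖ • w := by rw [hw_def, smul_inv_smul₀ hr.ne']
  have hcos : Real.cos (2*π/3) < Real.cos (∠ Q P R) :=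
    Real.cos_lt_cos_of_nonneg_of_le_pi (EuclideanGeometry.angle_nonneg _ _ _)
      (by nlinarith [Real.pi_pos]) h
  have hcos23 : Real.cos (2*π/3) = -(1/2) := by
    have : (2*π/3) = π - π/3 := by ring
    rw [this, Real.cos_pi_sub, Real.cos_pi_div_three]
  have hcos_eq : Real.cos (∠ Q P R) = ⟪v, w⟫ := by
    rw [EuclideanGeometry.angle, InnerProductGeometry.cos_angle, vsub_eq_sub, vsub_eq_sub,
      hv_def, hw_def, real_inner_smul_left, real_inner_smul_right]
    field_simp
  have hc : -(1/2) < ⟪v, w⟫ := by rw [← hcos23, ← hcos_eq]; exact hcos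
  clear hv_def hw_def
  obtain ⟨u, hu_def⟩ : ∃ u : V, u = v + w := ⟨_, rfl⟩
  have hvw : ⟪v, w⟫ = ⟪w, v⟫ := real_inner_comm w v
  have hu_sq : ‖u‖^2 = 2 + 2*⟪v, w⟫ := by
    rw [hu_def, norm_add_sq_real, hv1, hw1]; ring
  have hu_gt1 : 1 < ‖u‖ := by nlinarith [norm_nonneg u]
  have huv : ⟪u, v⟫ + ⟪u, w⟫ = ‖u‖^2 := by
    rw [hu_def, inner_add_left, inner_add_left, real_inner_self_eq_norm_sq v,
      real_inner_self_eq_norm_sq w, norm_add_sq_real, hv1, hw1]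
    linarith [hvw]
  have hu0 : (0:ℝ) < ‖u‖ := by linarith
  obtain ⟨K, hK_def⟩ : ∃ K : ℝ, K = ‖u‖^2/(2*‖Q-P‖) + ‖u‖^2/(2*‖R-P‖) := ⟨_, rfl⟩
  have hK : 0 < K := by rw [hK_def]; positivity
  obtain ⟨t, ht_def⟩ : ∃ t : ℝ,
      t = min (‖Q-P‖/‖u‖) (min (‖R-P‖/‖u‖) ((‖u‖^2-‖u‖)/(2*K))) := ⟨_, rfl⟩
  have ht : 0 < t := by
    rw [ht_def]
    exact lt_min (by positivity) (lt_min (by positivity)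
      (div_pos (by nlinarith) (by linarith)))
  have htq : t * ‖u‖ ≤ ‖Q - P‖ := by
    have h1 : t ≤ ‖Q-P‖/‖u‖ := by rw [ht_def]; exact min_le_left _ _
    calc t * ‖u‖ ≤ (‖Q-P‖/‖u‖) * ‖u‖ := mul_le_mul_of_nonneg_right h1 hu0.le
      _ = ‖Q-P‖ := div_mul_cancel₀ _ hu0.ne'
  have htr : t * ‖u‖ ≤ ‖R - P‖ := by
    have h1 : t ≤ ‖R-P‖/‖u‖ := by
      rw [ht_def]; exact le_trans (min_le_right _ _) (min_le_left _ _)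
    calc t * ‖u‖ ≤ (‖R-P‖/‖u‖) * ‖u‖ := mul_le_mul_of_nonneg_right h1 hu0.le
      _ = ‖R-P‖ := div_mul_cancel₀ _ hu0.ne'
  have htK : t * K ≤ (‖u‖^2-‖u‖)/2 := by
    have h1 : t ≤ (‖u‖^2-‖u‖)/(2*K) := by
      rw [ht_def]; exact le_trans (min_le_right _ _) (min_le_right _ _)
    calc t * K ≤ ((‖u‖^2-‖u‖)/(2*K)) * K := mul_le_mul_of_nonneg_right h1 hK.le
      _ = (‖u‖^2-‖u‖)/2 := by field_simp
  clear ht_def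
  refine ⟨P + t • u, ?_⟩
  have hxP : ‖(P + t • u) - P‖ = t * ‖u‖ := by
    simp [norm_smul, abs_of_pos ht]
  have hnd : ‖t • u‖ = t * ‖u‖ := by rw [norm_smul, Real.norm_eq_abs, abs_of_pos ht]
  have hq' : ‖P - Q‖ = ‖Q - P‖ := norm_sub_rev P Q
  have hr' : ‖P - R‖ = ‖R - P‖ := norm_sub_rev P R
  have hiq : ⟪t • u, P - Q⟫ = -(t * ⟪u, v⟫ * ‖Q - P‖) := by
    have e : ⟪u, Q - P⟫ = ‖Q - P‖ * ⟪u, v⟫ := by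
      conv_lhs => rw [hQP]
      rw [real_inner_smul_right]
    have e2 : P - Q = -(Q - P) := by abel
    rw [real_inner_smul_left, e2, inner_neg_right, e]; ring
  have hir : ⟪t • u, P - R⟫ = -(t * ⟪u, w⟫ * ‖R - P‖) := by
    have e : ⟪u, R - P⟫ = ‖R - P‖ * ⟪u, w⟫ := by
      conv_lhs => rw [hRP]
      rw [real_inner_smul_right]
    have e2 : P - R = -(R - P) := by abel
    rw [real_inner_smul_left, e2, inner_neg_right, e]; ring
  have hxQ : ‖(P + t • u) - Q‖ ≤ ‖P - Q‖ - t * ⟪u, v⟫ + (t*‖u‖)^2/(2*‖P-Q‖) := by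
    have hPQ : P - Q ≠ 0 := sub_ne_zero.mpr (fun hh => hQ hh.symm)
    have heq : (P + t • u) - Q = (P - Q) + t • u := by abel
    rw [heq]
    have hb := FT_upper (P - Q) (t • u) hPQ (by rw [hnd, hq']; exact htq)
    rw [hiq, hnd] at hb
    have e : -(t * ⟪u, v⟫ * ‖Q - P‖) / ‖P - Q‖ = -(t * ⟪u, v⟫) := by
      rw [hq']; field_simp
    rw [e] at hb; linarith
  have hxR : ‖(P + t • u) - R‖ ≤ ‖P - R‖ - t * ⟪u, w⟫ + (t*‖u‖)^2/(2*‖P-R‖) := by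
    have hPR : P - R ≠ 0 := sub_ne_zero.mpr (fun hh => hR hh.symm)
    have heq : (P + t • u) - R = (P - R) + t • u := by abel
    rw [heq]
    have hb := FT_upper (P - R) (t • u) hPR (by rw [hnd, hr']; exact htr)
    rw [hir, hnd] at hb
    have e : -(t * ⟪u, w⟫ * ‖R - P‖) / ‖P - R‖ = -(t * ⟪u, w⟫) := by
      rw [hr']; field_simp
    rw [e] at hb; linarith
  have e3 : (t*‖u‖)^2/(2*‖P-Q‖) + (t*‖u‖)^2/(2*‖P-R‖) = t^2 * K := by
    rw [hq', hr', hK_def]; ring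
  have hdist : t * ⟪u, v⟫ + t * ⟪u, w⟫ = t * ‖u‖^2 := by rw [← huv]; ring
  have h5 : ‖u‖ < ‖u‖^2 := by
    calc ‖u‖ = 1*‖u‖ := (one_mul _).symm
      _ < ‖u‖*‖u‖ := mul_lt_mul_of_pos_right hu_gt1 hu0
      _ = ‖u‖^2 := (sq ‖u‖).symm
  have h6 : t * (t * K) ≤ t * ((‖u‖^2-‖u‖)/2) := mul_le_mul_of_nonneg_left htK ht.le
  have h7 : t^2*K = t*(t*K) := by ring
  have h8 : t*(‖u‖^2-‖u‖) = t*‖u‖^2 - t*‖u‖ := by ring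
  have h9 : 0 < t*(‖u‖^2-‖u‖) := mul_pos ht (by linarith)
  have h10 : t*((‖u‖^2-‖u‖)/2) = (t*‖u‖^2 - t*‖u‖)/2 := by ring
  have final : t * ‖u‖ - (t * ⟪u,v⟫ + t * ⟪u,w⟫) + t^2*K < 0 := by
    rw [hdist]; linarith
  calc ‖(P + t • u) - P‖ + ‖(P + t • u) - Q‖ + ‖(P + t • u) - R‖
      ≤ t * ‖u‖ + (‖P - Q‖ - t * ⟪u, v⟫ + (t*‖u‖)^2/(2*‖P-Q‖))
        + (‖P - R‖ - t * ⟪u, w⟫ + (t*‖u‖)^2/(2*‖P-R‖)) := by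
        rw [hxP]; linarith [hxQ, hxR]
    _ = ‖P - Q‖ + ‖P - R‖ + (t * ‖u‖ - (t * ⟪u,v⟫ + t * ⟪u,w⟫) + t^2*K) := by
        rw [← e3]; ring
    _ < ‖P - Q‖ + ‖P - R‖ := by linarith

/-- first-order condition at an interior minimizer -/
lemma FT_grad (A B C F : V) (hA : F ≠ A) (hB : F ≠ B) (hC : F ≠ C)
    (hmin : ∀ x : V, ‖F-A‖+‖F-B‖+‖F-C‖ ≤ ‖x-A‖+‖x-B‖+‖x-C‖) :
    ‖F-A‖⁻¹ • (F-A) + ‖F-B‖⁻¹ • (F-B) + ‖F-C‖⁻¹ • (F-C) = 0 := by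
  by_contra hs
  have ha : (0:ℝ) < ‖F - A‖ := by rw [norm_pos_iff]; exact sub_ne_zero.mpr hA
  have hb : (0:ℝ) < ‖F - B‖ := by rw [norm_pos_iff]; exact sub_ne_zero.mpr hB
  have hc : (0:ℝ) < ‖F - C‖ := by rw [norm_pos_iff]; exact sub_ne_zero.mpr hC
  obtain ⟨s, hs_def⟩ : ∃ s : V, s = ‖F-A‖⁻¹ • (F-A) + ‖F-B‖⁻¹ • (F-B) + ‖F-C‖⁻¹ • (F-C) :=
    ⟨_, rfl⟩
  rw [← hs_def] at hs
  have hs0 : (0:ℝ) < ‖s‖ := norm_pos_iff.mpr hs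
  obtain ⟨u, hu_def⟩ : ∃ u : V, u = -s := ⟨_, rfl⟩
  have hu0 : (0:ℝ) < ‖u‖ := by rw [hu_def, norm_neg]; exact hs0
  have hus : ⟪u, s⟫ = -(‖s‖^2) := by
    rw [hu_def, inner_neg_left, real_inner_self_eq_norm_sq]
  -- inner products with each direction
  have key : ∀ t : ℝ, 0 < t → t * ‖u‖ ≤ ‖F-A‖ → t * ‖u‖ ≤ ‖F-B‖ → t * ‖u‖ ≤ ‖F-C‖ →
      0 ≤ t * ⟪u, s⟫ + t^2 * (‖u‖^2/(2*‖F-A‖) + ‖u‖^2/(2*‖F-B‖) + ‖u‖^2/(2*‖F-C‖)) := by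
    intro t ht hta htb htc
    have hnd : ‖t • u‖ = t * ‖u‖ := by rw [norm_smul, Real.norm_eq_abs, abs_of_pos ht]
    have bA := FT_upper (F - A) (t • u) (sub_ne_zero.mpr hA) (by rw [hnd]; exact hta)
    have bB := FT_upper (F - B) (t • u) (sub_ne_zero.mpr hB) (by rw [hnd]; exact htb)
    have bC := FT_upper (F - C) (t • u) (sub_ne_zero.mpr hC) (by rw [hnd]; exact htc)
    have eA : (F + t • u) - A = (F - A) + t • u := by abel
    have eB : (F + t • u) - B = (F - B) + t • u := by abel
    have eC : (F + t • u) - C = (F - C) + t • u := by abel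
    have hmin' := hmin (F + t • u)
    rw [eA, eB, eC] at hmin'
    have iA : ⟪t • u, F - A⟫ = t * (⟪u, ‖F-A‖⁻¹ • (F-A)⟫ * ‖F-A‖) := by
      rw [real_inner_smul_left, real_inner_smul_right]
      field_simp
    have iB : ⟪t • u, F - B⟫ = t * (⟪u, ‖F-B‖⁻¹ • (F-B)⟫ * ‖F-B‖) := by
      rw [real_inner_smul_left, real_inner_smul_right]
      field_simp
    have iC : ⟪t • u, F - C⟫ = t * (⟪u, ‖F-C‖⁻¹ • (F-C)⟫ * ‖F-C‖) := by
      rw [real_inner_smul_left, real_inner_smul_right]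
      field_simp
    have dA : t * (⟪u, ‖F-A‖⁻¹ • (F-A)⟫ * ‖F-A‖) / ‖F-A‖ = t * ⟪u, ‖F-A‖⁻¹ • (F-A)⟫ := by
      field_simp
    have dB : t * (⟪u, ‖F-B‖⁻¹ • (F-B)⟫ * ‖F-B‖) / ‖F-B‖ = t * ⟪u, ‖F-B‖⁻¹ • (F-B)⟫ := by
      field_simp
    have dC : t * (⟪u, ‖F-C‖⁻¹ • (F-C)⟫ * ‖F-C‖) / ‖F-C‖ = t * ⟪u, ‖F-C‖⁻¹ • (F-C)⟫ := by
      field_simp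
    rw [iA, dA, hnd] at bA
    rw [iB, dB, hnd] at bB
    rw [iC, dC, hnd] at bC
    have hsum : t * ⟪u, ‖F-A‖⁻¹ • (F-A)⟫ + t * ⟪u, ‖F-B‖⁻¹ • (F-B)⟫
        + t * ⟪u, ‖F-C‖⁻¹ • (F-C)⟫ = t * ⟪u, s⟫ := by
      rw [hs_def, inner_add_right, inner_add_right]; ring
    have hsq : (t*‖u‖)^2/(2*‖F-A‖) + (t*‖u‖)^2/(2*‖F-B‖) + (t*‖u‖)^2/(2*‖F-C‖)
        = t^2 * (‖u‖^2/(2*‖F-A‖) + ‖u‖^2/(2*‖F-B‖) + ‖u‖^2/(2*‖F-C‖)) := by ring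
    linarith [bA, bB, bC, hmin', hsum, hsq]
  -- choose small t to contradict
  obtain ⟨K, hK_def⟩ : ∃ K : ℝ,
      K = ‖u‖^2/(2*‖F-A‖) + ‖u‖^2/(2*‖F-B‖) + ‖u‖^2/(2*‖F-C‖) := ⟨_, rfl⟩
  have hK : 0 < K := by rw [hK_def]; positivity
  obtain ⟨t, ht_def⟩ : ∃ t : ℝ,
      t = min (‖F-A‖/‖u‖) (min (‖F-B‖/‖u‖) (min (‖F-C‖/‖u‖) (‖s‖^2/(2*K)))) := ⟨_, rfl⟩
  have ht : 0 < t := by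
    rw [ht_def]
    exact lt_min (by positivity) (lt_min (by positivity) (lt_min (by positivity)
      (by positivity)))
  have hta : t * ‖u‖ ≤ ‖F-A‖ := by
    have h1 : t ≤ ‖F-A‖/‖u‖ := by rw [ht_def]; exact min_le_left _ _
    calc t * ‖u‖ ≤ (‖F-A‖/‖u‖) * ‖u‖ := mul_le_mul_of_nonneg_right h1 hu0.le
      _ = ‖F-A‖ := div_mul_cancel₀ _ hu0.ne'
  have htb : t * ‖u‖ ≤ ‖F-B‖ := by
    have h1 : t ≤ ‖F-B‖/‖u‖ := by
      rw [ht_def]; exact le_trans (min_le_right _ _) (min_le_left _ _)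
    calc t * ‖u‖ ≤ (‖F-B‖/‖u‖) * ‖u‖ := mul_le_mul_of_nonneg_right h1 hu0.le
      _ = ‖F-B‖ := div_mul_cancel₀ _ hu0.ne'
  have htc : t * ‖u‖ ≤ ‖F-C‖ := by
    have h1 : t ≤ ‖F-C‖/‖u‖ := by
      rw [ht_def]
      exact le_trans (min_le_right _ _) (le_trans (min_le_right _ _) (min_le_left _ _))
    calc t * ‖u‖ ≤ (‖F-C‖/‖u‖) * ‖u‖ := mul_le_mul_of_nonneg_right h1 hu0.le
      _ = ‖F-C‖ := div_mul_cancel₀ _ hu0.ne'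
  have htK : t * K ≤ ‖s‖^2/2 := by
    have h1 : t ≤ ‖s‖^2/(2*K) := by
      rw [ht_def]
      exact le_trans (min_le_right _ _) (le_trans (min_le_right _ _) (min_le_right _ _))
    calc t * K ≤ (‖s‖^2/(2*K)) * K := mul_le_mul_of_nonneg_right h1 hK.le
      _ = ‖s‖^2/2 := by field_simp
  have hkey := key t ht hta htb htc
  rw [hus, ← hK_def] at hkey
  have h7 : t^2*K = t*(t*K) := by ring
  have h8 : t*(t*K) ≤ t*(‖s‖^2/2) := mul_le_mul_of_nonneg_left htK ht.le
  have h9 : t*(‖s‖^2/2) < t*(‖s‖^2) := by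
    apply mul_lt_mul_of_pos_left _ ht
    nlinarith
  have h10 : t * -(‖s‖^2) = -(t*‖s‖^2) := by ring
  linarith

lemma FT_angle_unit (u v : V) (hu : ‖u‖ = 1) (hv : ‖v‖ = 1) (huv : ⟪u, v⟫ = -(1/2)) :
    InnerProductGeometry.angle u v = 2*π/3 := by
  unfold InnerProductGeometry.angle
  rw [hu, hv, huv]
  norm_num
  rw [show ((1:ℝ)/2) = (2⁻¹:ℝ) by norm_num] at *
  rw [show Real.arccos (-2⁻¹) = π - Real.arccos 2⁻¹ from Real.arccos_neg 2⁻¹]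
  have h3 : Real.arccos 2⁻¹ = π/3 := by
    rw [show (2⁻¹:ℝ) = Real.cos (π/3) by rw [Real.cos_pi_div_three]; norm_num]
    exact Real.arccos_cos (by positivity) (by linarith [Real.pi_pos])
  rw [h3]; ring

set_option maxHeartbeats 1600000 in
/-- For a triangle with all interior angles less than 120 degrees, the minimizer
of the sum of distances to the vertices is the unique interior point (the
Fermat–Torricelli point) from which all three sides subtend 120-degree angles. -/
theorem fermat_torricelli_point
    (A B C : EuclideanSpace ℝ (Fin 2))
    (hABC : AffineIndependent ℝ ![A, B, C])
    (h1 : ∠ B A C < 2 * π / 3) (h2 : ∠ A B C < 2 * π / 3) (h3 : ∠ A C B < 2 * π / 3) :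
    ∃! F : EuclideanSpace ℝ (Fin 2),
      (∀ x : EuclideanSpace ℝ (Fin 2),
        ‖F - A‖ + ‖F - B‖ + ‖F - C‖ ≤ ‖x - A‖ + ‖x - B‖ + ‖x - C‖) ∧
      F ∈ interior (convexHull ℝ ({A, B, C} : Set (EuclideanSpace ℝ (Fin 2)))) ∧
      ∠ A F B = 2 * π / 3 ∧ ∠ B F C = 2 * π / 3 ∧ ∠ C F A = 2 * π / 3 := by
  have hinj := hABC.injective
  have hAB : A ≠ B := fun h => absurd (hinj (show ![A,B,C] 0 = ![A,B,C] 1 by simp [h])) (by decide)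
  have hAC : A ≠ C := fun h => absurd (hinj (show ![A,B,C] 0 = ![A,B,C] 2 by simp [h])) (by decide)
  have hBC : B ≠ C := fun h => absurd (hinj (show ![A,B,C] 1 = ![A,B,C] 2 by simp [h])) (by decide)
  -- existence of a minimizer
  have hcont : Continuous (fun x : (EuclideanSpace ℝ (Fin 2)) => ‖x - A‖ + ‖x - B‖ + ‖x - C‖) :=
    (((continuous_id.sub continuous_const).norm.add
      ((continuous_id.sub continuous_const).norm)).add
      ((continuous_id.sub continuous_const).norm))
  have hco : Filter.Tendsto (fun x : (EuclideanSpace ℝ (Fin 2)) => ‖x - A‖ + ‖x - B‖ + ‖x - C‖)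
      (Filter.cocompact (EuclideanSpace ℝ (Fin 2))) Filter.atTop := by
    apply Filter.tendsto_atTop_mono (fun x => ?_)
      (Filter.tendsto_atTop_add_const_right _ (-‖A‖) tendsto_norm_cocompact_atTop)
    have hx1 : ‖x‖ - ‖A‖ ≤ ‖x - A‖ := norm_sub_norm_le x A
    have hx2 : (0:ℝ) ≤ ‖x - B‖ := norm_nonneg _
    have hx3 : (0:ℝ) ≤ ‖x - C‖ := norm_nonneg _
    linarith
  obtain ⟨F, hF0⟩ := hcont.exists_forall_le hco
  have hFm : ∀ x : EuclideanSpace ℝ (Fin 2),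
      ‖F - A‖ + ‖F - B‖ + ‖F - C‖ ≤ ‖x - A‖ + ‖x - B‖ + ‖x - C‖ := hF0
  clear hF0
  -- F is not a vertex
  have hFA : F ≠ A := by
    intro h
    obtain ⟨x, hx⟩ := FT_vertex_not_min A B C (Ne.symm hAB) (Ne.symm hAC) h1
    have hFx := hFm x
    rw [h] at hFx
    rw [sub_self, norm_zero] at hFx
    linarith
  have hFB : F ≠ B := by
    intro h
    obtain ⟨x, hx⟩ := FT_vertex_not_min B A C hAB (Ne.symm hBC) h2
    have hFx := hFm x
    rw [h] at hFx
    rw [sub_self, norm_zero] at hFx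
    linarith
  have hFC : F ≠ C := by
    intro h
    obtain ⟨x, hx⟩ := FT_vertex_not_min C A B hAC hBC h3
    have hFx := hFm x
    rw [h] at hFx
    rw [sub_self, norm_zero] at hFx
    linarith
  have ha : (0:ℝ) < ‖F - A‖ := by rw [norm_pos_iff]; exact sub_ne_zero.mpr hFA
  have hb : (0:ℝ) < ‖F - B‖ := by rw [norm_pos_iff]; exact sub_ne_zero.mpr hFB
  have hc : (0:ℝ) < ‖F - C‖ := by rw [norm_pos_iff]; exact sub_ne_zero.mpr hFC
  have ha' : (0:ℝ) < ‖A - F‖ := by rw [norm_sub_rev]; exact ha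
  have hb' : (0:ℝ) < ‖B - F‖ := by rw [norm_sub_rev]; exact hb
  have hc' : (0:ℝ) < ‖C - F‖ := by rw [norm_sub_rev]; exact hc
  have hgrad := FT_grad A B C F hFA hFB hFC hFm
  -- unit vectors from F towards vertices
  obtain ⟨uA, huA_def⟩ : ∃ u : (EuclideanSpace ℝ (Fin 2)), u = ‖A - F‖⁻¹ • (A - F) := ⟨_, rfl⟩
  obtain ⟨uB, huB_def⟩ : ∃ u : (EuclideanSpace ℝ (Fin 2)), u = ‖B - F‖⁻¹ • (B - F) := ⟨_, rfl⟩
  obtain ⟨uC, huC_def⟩ : ∃ u : (EuclideanSpace ℝ (Fin 2)), u = ‖C - F‖⁻¹ • (C - F) := ⟨_, rfl⟩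
  have huA1 : ‖uA‖ = 1 := by
    rw [huA_def, norm_smul, norm_inv, norm_norm, inv_mul_cancel₀ ha'.ne']
  have huB1 : ‖uB‖ = 1 := by
    rw [huB_def, norm_smul, norm_inv, norm_norm, inv_mul_cancel₀ hb'.ne']
  have huC1 : ‖uC‖ = 1 := by
    rw [huC_def, norm_smul, norm_inv, norm_norm, inv_mul_cancel₀ hc'.ne']
  have hAF : A - F = ‖A - F‖ • uA := by rw [huA_def, smul_inv_smul₀ ha'.ne']
  have hBF : B - F = ‖B - F‖ • uB := by rw [huB_def, smul_inv_smul₀ hb'.ne']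
  have hCF : C - F = ‖C - F‖ • uC := by rw [huC_def, smul_inv_smul₀ hc'.ne']
  have hnegA : uA = -(‖F - A‖⁻¹ • (F - A)) := by
    rw [huA_def, norm_sub_rev A F, show A - F = -(F - A) from (neg_sub F A).symm, smul_neg]
  have hnegB : uB = -(‖F - B‖⁻¹ • (F - B)) := by
    rw [huB_def, norm_sub_rev B F, show B - F = -(F - B) from (neg_sub F B).symm, smul_neg]
  have hnegC : uC = -(‖F - C‖⁻¹ • (F - C)) := by
    rw [huC_def, norm_sub_rev C F, show C - F = -(F - C) from (neg_sub F C).symm, smul_neg]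
  have hsum0 : uA + uB + uC = 0 := by
    rw [hnegA, hnegB, hnegC]
    have : -(‖F - A‖⁻¹ • (F - A)) + -(‖F - B‖⁻¹ • (F - B)) + -(‖F - C‖⁻¹ • (F - C))
        = -(‖F - A‖⁻¹ • (F - A) + ‖F - B‖⁻¹ • (F - B) + ‖F - C‖⁻¹ • (F - C)) := by abel
    rw [this, hgrad, neg_zero]
  -- pairwise inner products are -1/2
  have hinAB : ⟪uA, uB⟫ = -(1/2) := by
    have h := add_eq_zero_iff_eq_neg.mp hsum0
    have hn : ‖uA + uB‖^2 = 1 := by rw [h, norm_neg, huC1]; norm_num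
    rw [norm_add_sq_real, huA1, huB1] at hn
    linarith
  have hinBC : ⟪uB, uC⟫ = -(1/2) := by
    have h0 : uB + uC + uA = 0 := by rw [← hsum0]; abel
    have h := add_eq_zero_iff_eq_neg.mp h0
    have hn : ‖uB + uC‖^2 = 1 := by rw [h, norm_neg, huA1]; norm_num
    rw [norm_add_sq_real, huB1, huC1] at hn
    linarith
  have hinCA : ⟪uC, uA⟫ = -(1/2) := by
    have h0 : uC + uA + uB = 0 := by rw [← hsum0]; abel
    have h := add_eq_zero_iff_eq_neg.mp h0
    have hn : ‖uC + uA‖^2 = 1 := by rw [h, norm_neg, huB1]; norm_num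
    rw [norm_add_sq_real, huC1, huA1] at hn
    linarith
  -- angles
  have hangAB : ∠ A F B = 2*π/3 := by
    rw [EuclideanGeometry.angle, vsub_eq_sub, vsub_eq_sub, hAF, hBF,
      InnerProductGeometry.angle_smul_left_of_pos _ _ ha',
      InnerProductGeometry.angle_smul_right_of_pos _ _ hb']
    exact FT_angle_unit uA uB huA1 huB1 hinAB
  have hangBC : ∠ B F C = 2*π/3 := by
    rw [EuclideanGeometry.angle, vsub_eq_sub, vsub_eq_sub, hBF, hCF,
      InnerProductGeometry.angle_smul_left_of_pos _ _ hb',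
      InnerProductGeometry.angle_smul_right_of_pos _ _ hc']
    exact FT_angle_unit uB uC huB1 huC1 hinBC
  have hangCA : ∠ C F A = 2*π/3 := by
    rw [EuclideanGeometry.angle, vsub_eq_sub, vsub_eq_sub, hCF, hAF,
      InnerProductGeometry.angle_smul_left_of_pos _ _ hc',
      InnerProductGeometry.angle_smul_right_of_pos _ _ ha']
    exact FT_angle_unit uC uA huC1 huA1 hinCA
  -- interior membership
  obtain ⟨T, hT_def⟩ : ∃ T : ℝ, T = ‖F-A‖⁻¹ + ‖F-B‖⁻¹ + ‖F-C‖⁻¹ := ⟨_, rfl⟩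
  have hTpos : 0 < T := by rw [hT_def]; positivity
  obtain ⟨wt, hwt_def⟩ : ∃ w : Fin 3 → ℝ, w = ![‖F-A‖⁻¹/T, ‖F-B‖⁻¹/T, ‖F-C‖⁻¹/T] := ⟨_, rfl⟩
  have hsum1 : ∑ i : Fin 3, wt i = 1 := by
    rw [Fin.sum_univ_three, hwt_def]
    simp only [Matrix.cons_val_zero, Matrix.cons_val_one, Matrix.head_cons,
      Matrix.cons_val_two, Matrix.tail_cons]
    rw [← add_div, ← add_div, ← hT_def, div_self hTpos.ne']
  have hbtop : affineSpan ℝ (Set.range ![A, B, C]) = ⊤ := by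
    rw [hABC.affineSpan_eq_top_iff_card_eq_finrank_add_one]
    simp [finrank_euclideanSpace_fin]
  obtain ⟨bBasis, hb_coe⟩ : ∃ b : AffineBasis (Fin 3) ℝ (EuclideanSpace ℝ (Fin 2)),
      ⇑b = ![A, B, C] := ⟨⟨![A, B, C], hABC, hbtop⟩, rfl⟩
  have hTF : T • F = ‖F-A‖⁻¹ • A + ‖F-B‖⁻¹ • B + ‖F-C‖⁻¹ • C := by
    apply sub_eq_zero.mp
    have e : T • F - (‖F-A‖⁻¹ • A + ‖F-B‖⁻¹ • B + ‖F-C‖⁻¹ • C)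
        = ‖F-A‖⁻¹ • (F-A) + ‖F-B‖⁻¹ • (F-B) + ‖F-C‖⁻¹ • (F-C) := by
      rw [hT_def]; module
    rw [e, hgrad]
  have hcomb : (Finset.univ.affineCombination ℝ ![A,B,C]) wt = F := by
    rw [Finset.affineCombination_eq_linear_combination _ _ _ hsum1, Fin.sum_univ_three, hwt_def]
    simp only [Matrix.cons_val_zero, Matrix.cons_val_one, Matrix.head_cons,
      Matrix.cons_val_two, Matrix.tail_cons]
    have e : (‖F-A‖⁻¹/T) • A + (‖F-B‖⁻¹/T) • B + (‖F-C‖⁻¹/T) • C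
        = T⁻¹ • (‖F-A‖⁻¹ • A + ‖F-B‖⁻¹ • B + ‖F-C‖⁻¹ • C) := by module
    rw [e, ← hTF, smul_smul, inv_mul_cancel₀ hTpos.ne', one_smul]
  have hcoord : ∀ i : Fin 3, bBasis.coord i F = wt i := by
    intro i
    rw [← hcomb, ← hb_coe]
    exact bBasis.coord_apply_combination_of_mem (Finset.mem_univ i) hsum1
  have hint : F ∈ interior (convexHull ℝ ({A, B, C} : Set (EuclideanSpace ℝ (Fin 2)))) := by
    have hrange : ({A, B, C} : Set (EuclideanSpace ℝ (Fin 2))) = Set.range ⇑bBasis := by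
      rw [hb_coe]
      simp [Matrix.range_cons, Matrix.range_empty]
      ext x; simp; tauto
    rw [hrange, bBasis.interior_convexHull]
    intro i
    rw [hcoord i, hwt_def]
    fin_cases i <;> simp <;> positivity
  -- assemble
  refine ⟨F, ⟨hFm, hint, hangAB, hangBC, hangCA⟩, ?_⟩
  rintro F' ⟨hmin', hint', hang1', hang2', hang3'⟩
  by_contra hne
  -- F' is not a vertex
  have hFm'A : F' ≠ A := by
    intro h
    rw [h, EuclideanGeometry.angle, vsub_self, InnerProductGeometry.angle_zero_left] at hang1'
    linarith [Real.pi_pos]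
  have hFm'B : F' ≠ B := by
    intro h
    rw [h, EuclideanGeometry.angle, vsub_self, InnerProductGeometry.angle_zero_right] at hang1'
    linarith [Real.pi_pos]
  have hFm'C : F' ≠ C := by
    intro h
    rw [h, EuclideanGeometry.angle, vsub_self, InnerProductGeometry.angle_zero_right] at hang2'
    linarith [Real.pi_pos]
  -- equal minimum values
  have heqmin : ‖F - A‖ + ‖F - B‖ + ‖F - C‖ = ‖F' - A‖ + ‖F' - B‖ + ‖F' - C‖ :=
    le_antisymm (hFm F') (hmin' F)
  -- midpoint argument
  obtain ⟨M, hM_def⟩ : ∃ M : (EuclideanSpace ℝ (Fin 2)), M = (2⁻¹:ℝ) • (F + F') := ⟨_, rfl⟩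
  have hMA : M - A = (2⁻¹:ℝ) • ((F - A) + (F' - A)) := by rw [hM_def]; module
  have hMB : M - B = (2⁻¹:ℝ) • ((F - B) + (F' - B)) := by rw [hM_def]; module
  have hMC : M - C = (2⁻¹:ℝ) • ((F - C) + (F' - C)) := by rw [hM_def]; module
  have hnMA : ‖M - A‖ = 2⁻¹ * ‖(F - A) + (F' - A)‖ := by
    rw [hMA, norm_smul]; norm_num
  have hnMB : ‖M - B‖ = 2⁻¹ * ‖(F - B) + (F' - B)‖ := by
    rw [hMB, norm_smul]; norm_num
  have hnMC : ‖M - C‖ = 2⁻¹ * ‖(F - C) + (F' - C)‖ := by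
    rw [hMC, norm_smul]; norm_num
  have htriA : ‖(F - A) + (F' - A)‖ ≤ ‖F - A‖ + ‖F' - A‖ := norm_add_le _ _
  have htriB : ‖(F - B) + (F' - B)‖ ≤ ‖F - B‖ + ‖F' - B‖ := norm_add_le _ _
  have htriC : ‖(F - C) + (F' - C)‖ ≤ ‖F - C‖ + ‖F' - C‖ := norm_add_le _ _
  have hFM : ‖F - A‖ + ‖F - B‖ + ‖F - C‖ ≤ ‖M - A‖ + ‖M - B‖ + ‖M - C‖ := hFm M
  rw [hnMA, hnMB, hnMC] at hFM
  have heqA : ‖(F - A) + (F' - A)‖ = ‖F - A‖ + ‖F' - A‖ := by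
    linarith only [hFM, htriA, htriB, htriC, heqmin]
  have heqB : ‖(F - B) + (F' - B)‖ = ‖F - B‖ + ‖F' - B‖ := by
    linarith only [hFM, htriA, htriB, htriC, heqmin]
  have heqC : ‖(F - C) + (F' - C)‖ = ‖F - C‖ + ‖F' - C‖ := by
    linarith only [hFM, htriA, htriB, htriC, heqmin]
  -- same-ray conclusions give collinearity
  have hFF' : F' - F ≠ 0 := sub_ne_zero.mpr (fun h => hne h)
  have hline : ∀ X : (EuclideanSpace ℝ (Fin 2)), F ≠ X → F' ≠ X →
      ‖(F - X) + (F' - X)‖ = ‖F - X‖ + ‖F' - X‖ → ∃ r : ℝ, X = r • (F' - F) +ᵥ F := by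
    intro X hFX hFm'X heq
    have hsr : SameRay ℝ (F - X) (F' - X) := sameRay_iff_norm_add.mpr heq
    obtain ⟨r₁, r₂, hr₁, hr₂, hr⟩ := hsr.exists_pos (sub_ne_zero.mpr hFX) (sub_ne_zero.mpr hFm'X)
    obtain ⟨ρ, hρ_def⟩ : ∃ ρ : ℝ, ρ = r₂⁻¹ * r₁ := ⟨_, rfl⟩
    have hρpos : 0 < ρ := by rw [hρ_def]; positivity
    have hρeq : F' - X = ρ • (F - X) := by
      rw [hρ_def, mul_smul, hr, inv_smul_smul₀ hr₂.ne']
    have hdiff : F' - F = (ρ - 1) • (F - X) := by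
      rw [sub_smul, ← hρeq, one_smul]; abel
    have hρne1 : ρ - 1 ≠ 0 := by
      intro h
      rw [h, zero_smul] at hdiff
      exact hFF' hdiff
    refine ⟨-(ρ-1)⁻¹, ?_⟩
    rw [vadd_eq_add, hdiff, smul_smul]
    rw [show -(ρ-1)⁻¹ * (ρ-1) = -1 by field_simp]
    rw [neg_one_smul]
    abel
  obtain ⟨rA, hrA⟩ := hline A hFA hFm'A heqA
  obtain ⟨rB, hrB⟩ := hline B hFB hFm'B heqB
  obtain ⟨rC, hrC⟩ := hline C hFC hFm'C heqC
  have hcoll : Collinear ℝ ({A, B, C} : Set (EuclideanSpace ℝ (Fin 2))) := by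
    rw [collinear_iff_exists_forall_eq_smul_vadd]
    refine ⟨F, F' - F, ?_⟩
    rintro p (rfl | rfl | rfl)
    · exact ⟨rA, hrA⟩
    · exact ⟨rB, hrB⟩
    · exact ⟨rC, hrC⟩
  have hnotcoll := affineIndependent_iff_not_collinear.mp hABC
  apply hnotcoll
  have : Set.range ![A, B, C] = ({A, B, C} : Set (EuclideanSpace ℝ (Fin 2))) := by
    simp [Matrix.range_cons, Matrix.range_empty]
    ext x; simp; tauto
  rw [this]
  exact hcoll
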